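/- For every k ≥ 1 and n ≥ k, every subset S of F_2^n with |S| ≥ (5/2)·2^{n(1 − 1/2^{k−1})} contains a full k-dimensional affine subspace of F_2^n (i.e., there exists a k-flat H with H ⊆ S). -/

import Mathlib

open Module Set

section Helpers

variable {V : Type} [AddCommGroup V] [Module (ZMod 2) V]

lemma char2_add_self (x : V) : x + x = 0 := by
  have h2 : ((2 : ZMod 2)) = 0 := by decide
  have : ((2 : ZMod 2)) • x = 0 := by rw [h2, zero_smul]
  rwa [two_smul] at this

lemma mem_span2 {v a : V} (h : a ∈ Submodule.span (ZMod 2) {v}) : a = 0 ∨ a = v := by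
  rw [Submodule.mem_span_singleton] at h
  obtain ⟨c, rfl⟩ := h
  fin_cases c
  · left; exact zero_smul (ZMod 2) v
  · right; exact one_smul (ZMod 2) v

lemma flat_two {S : Set V} (hS : 2 ≤ S.ncard) :
    ∃ (x : V) (W : Submodule (ZMod 2) V), finrank (ZMod 2) W = 1 ∧
      (fun w => x + w) '' (W : Set V) ⊆ S := by
  have hfin : S.Finite := by
    by_contra h
    rw [Set.Infinite.ncard (fun hf => h hf)] at hS; omega
  obtain ⟨x, y, hx, hy, hxy⟩ := (Set.one_lt_ncard_iff hfin).1 (by omega)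
  have hv : x + y ≠ 0 := by
    intro h
    apply hxy
    have h1 : x + (x + y) = x := by rw [h, add_zero]
    rw [← add_assoc, char2_add_self, zero_add] at h1
    exact h1.symm
  refine ⟨x, Submodule.span (ZMod 2) {x + y}, finrank_span_singleton hv, ?_⟩
  rintro _ ⟨w, hw, rfl⟩
  rcases mem_span2 hw with rfl | rfl
  · simpa using hx
  · have h1 : x + (x + y) = y := by rw [← add_assoc, char2_add_self, zero_add]
    simpa [h1] using hy

lemma pigeon [Fintype V] [DecidableEq V] (F : Finset V) (h2 : 2 ≤ Fintype.card V) :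
    ∃ d : V, d ≠ 0 ∧
      F.card * F.card ≤ F.card + (Fintype.card V - 1) * (F.filter fun x => x + d ∈ F).card := by
  set c : V → ℕ := fun d => (F.filter fun x => x + d ∈ F).card with hc
  have hinner : ∀ x : V, (Finset.univ.filter fun d => x + d ∈ F).card = F.card := by
    intro x
    apply Finset.card_bij (fun d _ => x + d)
    · intro a ha; simpa using (Finset.mem_filter.1 ha).2
    · intro a _ b _ hab; exact add_left_cancel hab
    · intro y hy
      refine ⟨x + y, ?_, ?_⟩
      · simp only [Finset.mem_filter, Finset.mem_univ, true_and]
        rwa [← add_assoc, char2_add_self, zero_add]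
      · rw [← add_assoc, char2_add_self, zero_add]
  have hsum : ∑ d : V, c d = F.card * F.card := by
    have h1 : ∀ d : V, c d = ∑ x ∈ F, if x + d ∈ F then 1 else 0 := by
      intro d; exact Finset.card_filter _ _
    rw [Finset.sum_congr rfl fun d _ => h1 d, Finset.sum_comm]
    have h2' : ∀ x ∈ F, (∑ d : V, if x + d ∈ F then 1 else 0) = F.card := by
      intro x _
      rw [← hinner x]
      exact (Finset.card_filter _ _).symm
    rw [Finset.sum_congr rfl h2', Finset.sum_const, smul_eq_mul]
  have hc0 : c 0 = F.card := by
    simp only [hc, add_zero]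
    rw [Finset.filter_true_of_mem fun x hx => hx]
  set s : Finset V := Finset.univ.erase 0 with hs
  have hscard : s.card = Fintype.card V - 1 := by
    rw [hs, Finset.card_erase_of_mem (Finset.mem_univ 0), Finset.card_univ]
  have hsne : s.Nonempty := by
    rw [← Finset.card_pos, hscard]; omega
  have hsum' : ∑ d ∈ s, c d + F.card = F.card * F.card := by
    rw [← hsum, hs, ← hc0]
    exact Finset.sum_erase_add _ _ (Finset.mem_univ 0)
  obtain ⟨d, hd, hle⟩ : ∃ d ∈ s, (∑ e ∈ s, c e) ≤ s.card * c d := by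
    apply Finset.exists_le_of_sum_le hsne
    rw [← Finset.mul_sum, Finset.sum_const, smul_eq_mul]
  refine ⟨d, Finset.ne_of_mem_erase hd, ?_⟩
  have hfin : F.card * F.card ≤ F.card + s.card * c d := by omega
  rw [hscard] at hfin
  exact hfin

lemma halving [FiniteDimensional (ZMod 2) V] [Finite V] {d : V} (hd : d ≠ 0)
    {T : Set V} (hsat : ∀ x ∈ T, x + d ∈ T) :
    ∃ (U : Submodule (ZMod 2) V) (T' : Set V), T' ⊆ T ∧ T' ⊆ (U : Set V) ∧ d ∉ U ∧
      finrank (ZMod 2) U + 1 = finrank (ZMod 2) V ∧ T.ncard = 2 * T'.ncard := by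
  obtain ⟨U, hU⟩ := Submodule.exists_isCompl (Submodule.span (ZMod 2) {d})
  have hdU : d ∉ U := by
    intro h
    have : d ∈ Submodule.span (ZMod 2) {d} ⊓ U :=
      ⟨Submodule.mem_span_singleton_self d, h⟩
    rw [hU.inf_eq_bot] at this
    exact hd this
  have hnegd : -d = d := neg_eq_of_add_eq_zero_left (char2_add_self d)
  set f : V →ₗ[ZMod 2] U := Submodule.projectionOnto (p := U) (q := Submodule.span (ZMod 2) {d}) hU.symm
    with hf
  have hkey : ∀ x : V, (f x : V) = x ∨ (f x : V) = x + d := by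
    intro x
    have hz : f (x - (f x : V)) = 0 := by
      rw [map_sub, Submodule.projectionOnto_apply_left hU.symm (f x), sub_self]
    have hmem : x - (f x : V) ∈ Submodule.span (ZMod 2) {d} :=
      (Submodule.projectionOnto_apply_eq_zero_iff hU.symm).1 hz
    rcases mem_span2 hmem with h | h
    · left; rw [sub_eq_zero] at h; exact h.symm
    · right
      have h2 : (f x : V) = x - d := by
        rw [← h, sub_sub_cancel]
      rw [h2, sub_eq_add_neg, hnegd]
  set T' : Set V := (fun x => ((f x : V))) '' T with hT'
  have hT'U : T' ⊆ (U : Set V) := by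
    rintro _ ⟨x, _, rfl⟩; exact (f x).2
  have hT'T : T' ⊆ T := by
    rintro _ ⟨x, hx, rfl⟩
    show (f x : V) ∈ T
    rcases hkey x with h | h
    · rw [h]; exact hx
    · rw [h]; exact hsat x hx
  have hcover : T = T' ∪ (fun y => y + d) '' T' := by
    apply Set.Subset.antisymm
    · intro x hx
      rcases hkey x with h | h
      · left; exact ⟨x, hx, h⟩
      · right
        refine ⟨(f x : V), ⟨x, hx, rfl⟩, ?_⟩
        show (f x : V) + d = x
        rw [h, add_assoc, char2_add_self, add_zero]
    · rintro x (hx | ⟨y, hy, rfl⟩)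
      · exact hT'T hx
      · exact hsat y (hT'T hy)
  have hdisj : Disjoint T' ((fun y => y + d) '' T') := by
    rw [Set.disjoint_left]
    rintro a haT' ⟨y, hyT', rfl⟩
    apply hdU
    have h1 : y + d ∈ U := hT'U haT'
    have h2 : y ∈ U := hT'U hyT'
    have h3 : y + d + y ∈ U := U.add_mem h1 h2
    rwa [add_comm y d, add_assoc, char2_add_self, add_zero] at h3
  have hcard : T.ncard = 2 * T'.ncard := by
    rw [hcover, Set.ncard_union_eq hdisj (Set.toFinite _) (Set.toFinite _),
      Set.ncard_image_of_injective _
        (fun a b hab => by simpa using hab : Function.Injective (fun y : V => y + d))]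
    ring
  refine ⟨U, T', hT'T, hT'U, hdU, ?_, hcard⟩
  have h4 := Submodule.finrank_add_eq_of_isCompl hU.symm
  rwa [finrank_span_singleton hd] at h4

lemma push_extend [FiniteDimensional (ZMod 2) V] {U : Submodule (ZMod 2) V} {d : V}
    (hdU : d ∉ U) {T : Set V} (hsat : ∀ x ∈ T, x + d ∈ T) {T' : Set V} (hT'T : T' ⊆ T)
    {k : ℕ} (x₀ : ↥U) (W : Submodule (ZMod 2) ↥U) (hWr : finrank (ZMod 2) W = k)
    (hWs : (fun w => x₀ + w) '' (W : Set ↥U) ⊆ (Subtype.val ⁻¹' T' : Set ↥U)) :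
    ∃ (x : V) (W' : Submodule (ZMod 2) V), finrank (ZMod 2) W' = k + 1 ∧
      (fun w => x + w) '' (W' : Set V) ⊆ T := by
  set W1 : Submodule (ZMod 2) V := W.map U.subtype with hW1
  have hW1r : finrank (ZMod 2) W1 = k := by
    rw [hW1, Submodule.finrank_map_subtype_eq]; exact hWr
  have hW1U : W1 ≤ U := Submodule.map_subtype_le U W
  have hdW1 : d ∉ W1 := fun h => hdU (hW1U h)
  have hd0 : d ≠ 0 := fun h => hdU (h ▸ U.zero_mem)
  have hinf : W1 ⊓ Submodule.span (ZMod 2) {d} = ⊥ := by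
    rw [Submodule.eq_bot_iff]
    rintro a ⟨ha1, ha2⟩
    rcases mem_span2 ha2 with rfl | rfl
    · rfl
    · exact absurd ha1 hdW1
  have hW2r : finrank (ZMod 2) ↥(W1 ⊔ Submodule.span (ZMod 2) {d}) = k + 1 := by
    have h5 := Submodule.finrank_sup_add_finrank_inf_eq W1 (Submodule.span (ZMod 2) {d})
    rw [hinf, finrank_bot, hW1r, finrank_span_singleton hd0] at h5
    omega
  have hbase : ∀ w1 ∈ W1, (x₀ : V) + w1 ∈ T := by
    intro w1 hw1
    rw [hW1] at hw1
    obtain ⟨y0, hy0, rfl⟩ := hw1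
    have := hWs ⟨y0, hy0, rfl⟩
    exact hT'T this
  refine ⟨(x₀ : V), W1 ⊔ Submodule.span (ZMod 2) {d}, hW2r, ?_⟩
  rintro _ ⟨w, hw, rfl⟩
  rw [SetLike.mem_coe, Submodule.mem_sup] at hw
  obtain ⟨y, hy, z, hz, rfl⟩ := hw
  rcases mem_span2 hz with rfl | hzd
  · rw [add_zero]; exact hbase y hy
  · show (x₀ : V) + (y + z) ∈ T
    rw [hzd, ← add_assoc]
    exact hsat _ (hbase y hy)

end Helpers

set_option maxHeartbeats 2000000 in
theorem main_flat (k : ℕ) (hk : 1 ≤ k) :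
    ∀ (V : Type) [AddCommGroup V] [Module (ZMod 2) V] [FiniteDimensional (ZMod 2) V]
      (S : Set V),
      (5 / 2 : ℝ) * 2 ^ ((finrank (ZMod 2) V : ℝ) * (1 - 1 / 2 ^ (k - 1))) ≤ (S.ncard : ℝ) →
      ∃ (x : V) (W : Submodule (ZMod 2) V), finrank (ZMod 2) W = k ∧
        (fun w => x + w) '' (W : Set V) ⊆ S := by
  induction k, hk using Nat.le_induction with
  | base =>
    intro V _ _ _ S hS
    apply flat_two
    have h0 : ((finrank (ZMod 2) V : ℝ) * (1 - 1 / 2 ^ (1 - 1))) = 0 := by norm_num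
    rw [h0, Real.rpow_zero, mul_one] at hS
    have h2 : (2 : ℝ) ≤ (S.ncard : ℝ) := by linarith
    exact_mod_cast h2
  | succ k hk ih =>
    intro V _ _ _ S hS
    classical
    haveI : Finite V := Finite.of_equiv _ (Module.finBasis (ZMod 2) V).equivFun.toEquiv.symm
    haveI : Fintype V := Fintype.ofFinite V
    set n := finrank (ZMod 2) V with hn
    simp only [Nat.add_sub_cancel] at hS
    have hcardV : Fintype.card V = 2 ^ n := by
      have h6 := card_eq_pow_finrank (K := ZMod 2) (V := V)
      rwa [ZMod.card] at h6
    set m := S.ncard with hm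
    set F := S.toFinset with hF
    have hFm : F.card = m := (Set.ncard_eq_toFinset_card' S).symm
    set A := (2 : ℝ) ^ ((n : ℝ) * (1 - 1 / 2 ^ k)) with hA
    have h2k1 : (1 : ℝ) ≤ 2 ^ k := one_le_pow₀ (by norm_num)
    have hα : 0 ≤ (n : ℝ) * (1 - 1 / 2 ^ k) := by
      apply mul_nonneg (Nat.cast_nonneg n)
      have : 1 / (2 : ℝ) ^ k ≤ 1 := by
        rw [div_le_one (by positivity)]; exact h2k1
      linarith
    have hA1 : (1 : ℝ) ≤ A := by
      calc (1 : ℝ) = 2 ^ (0 : ℝ) := (Real.rpow_zero 2).symm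
      _ ≤ A := Real.rpow_le_rpow_of_exponent_le one_le_two hα
    have hm52 : (5 / 2 : ℝ) ≤ (m : ℝ) := by nlinarith
    have hm3 : 3 ≤ m := by
      have h7 : (2 : ℝ) < (m : ℝ) := by linarith
      have h8 : 2 < m := by exact_mod_cast h7
      omega
    have hcard2 : 2 ≤ Fintype.card V := by
      have h9 : F.card ≤ Fintype.card V := Finset.card_le_univ F
      omega
    obtain ⟨d, hd0, hpig⟩ := pigeon F hcard2
    set T : Set V := {x | x ∈ S ∧ x + d ∈ S} with hT
    have hTF : T = ↑(F.filter fun x => x + d ∈ F) := by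
      ext x; simp [hT, hF, Set.mem_toFinset]
    have hTc : T.ncard = (F.filter fun x => x + d ∈ F).card := by
      rw [hTF, Set.ncard_coe_finset]
    have hTS : T ⊆ S := fun x hx => hx.1
    have hsat : ∀ x ∈ T, x + d ∈ T := by
      intro x hx
      refine ⟨hx.2, ?_⟩
      rw [add_assoc, char2_add_self, add_zero]
      exact hx.1
    obtain ⟨U, T', hT'T, hT'U, hdU, hrankU, hhalf⟩ := halving hd0 hsat
    set t := T'.ncard with ht
    have hnat : m * m ≤ m + 2 ^ n * (2 * t) := by
      have h10 : (F.filter fun x => x + d ∈ F).card = 2 * t := by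
        rw [← hTc, hhalf]
      rw [hFm, hcardV, h10] at hpig
      have h11 : (2 ^ n - 1) * (2 * t) ≤ 2 ^ n * (2 * t) :=
        Nat.mul_le_mul_right _ (Nat.sub_le _ _)
      omega
    have hr : (m : ℝ) * m ≤ (m : ℝ) + (2 : ℝ) ^ (n : ℝ) * (2 * t) := by
      have h12 : ((m * m : ℕ) : ℝ) ≤ ((m + 2 ^ n * (2 * t) : ℕ) : ℝ) := by exact_mod_cast hnat
      push_cast at h12
      rwa [← Real.rpow_natCast 2 n] at h12
    have h1 : (5 / 2) * A * ((5 / 2) * A) ≤ (m : ℝ) * m :=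
      mul_le_mul hS hS (by positivity) (Nat.cast_nonneg m)
    have h3 : (3 / 5) * ((m : ℝ) * m) ≤ (2 : ℝ) ^ (n : ℝ) * (2 * t) := by
      nlinarith [mul_le_mul_of_nonneg_left hm52 (Nat.cast_nonneg m : (0 : ℝ) ≤ (m : ℝ))]
    have hX : (15 / 4) * (A * A) ≤ (2 : ℝ) ^ (n : ℝ) * (2 * t) := by
      nlinarith
    set B := (2 : ℝ) ^ ((n : ℝ) * (1 - 1 / 2 ^ (k - 1))) with hB
    have hk1 : k = (k - 1) + 1 := (Nat.succ_pred_eq_of_pos hk).symm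
    have hAB : A * A = B * (2 : ℝ) ^ (n : ℝ) := by
      rw [hA, hB, ← Real.rpow_add two_pos, ← Real.rpow_add two_pos]
      congr 1
      have h2kk : (2 : ℝ) ^ k = 2 * 2 ^ (k - 1) := by
        conv_lhs => rw [hk1]
        rw [pow_succ]; ring
      have hP : (0 : ℝ) < 2 ^ (k - 1) := by positivity
      rw [h2kk]
      field_simp
      ring
    have hBt : (15 / 8) * B ≤ (t : ℝ) := by
      have hp : (0 : ℝ) < (2 : ℝ) ^ (n : ℝ) := Real.rpow_pos_of_pos two_pos _
      rw [hAB] at hX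
      nlinarith
    set T'' : Set ↥U := Subtype.val ⁻¹' T' with hT''
    have ht'' : T''.ncard = t := by
      have himg : Subtype.val '' T'' = T' :=
        Set.image_preimage_eq_of_subset (by rw [Subtype.range_coe]; exact hT'U)
      rw [ht, ← himg, Set.ncard_image_of_injective _ Subtype.val_injective]
    rcases Nat.lt_or_ge k 2 with hk2 | hk2
    · -- k = 1
      have hk1' : k = 1 := by omega
      subst hk1'
      have hB1 : B = 1 := by
        rw [hB]; norm_num
      have ht2 : 2 ≤ T''.ncard := by
        rw [ht'']
        have h13 : (15 / 8 : ℝ) ≤ (t : ℝ) := by rw [hB1] at hBt; linarith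
        have h14 : (1 : ℝ) < (t : ℝ) := by linarith
        have h15 : 1 < t := by exact_mod_cast h14
        omega
      obtain ⟨x₀, W, hWr, hWs⟩ := flat_two ht2
      obtain ⟨x, W', hr1, hr2⟩ := push_extend hdU hsat hT'T x₀ W hWr hWs
      exact ⟨x, W', hr1, hr2.trans hTS⟩
    · -- k ≥ 2
      have hnU : ((finrank (ZMod 2) ↥U : ℕ) : ℝ) = (n : ℝ) - 1 := by
        have h16 := congrArg (Nat.cast : ℕ → ℝ) hrankU
        push_cast at h16
        linarith
      have hUbound : (5 / 2 : ℝ) * 2 ^ ((finrank (ZMod 2) ↥U : ℝ) * (1 - 1 / 2 ^ (k - 1))) ≤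
          ((T''.ncard : ℕ) : ℝ) := by
        rw [ht'', hnU]
        set β := (1 : ℝ) - 1 / 2 ^ (k - 1) with hβdef
        have hβ : (1 / 2 : ℝ) ≤ β := by
          have h17 : (2 : ℝ) ≤ 2 ^ (k - 1) := by
            calc (2 : ℝ) = 2 ^ 1 := (pow_one 2).symm
            _ ≤ 2 ^ (k - 1) := pow_le_pow_right₀ one_le_two (by omega)
          have h18 : 1 / (2 : ℝ) ^ (k - 1) ≤ 1 / 2 :=
            one_div_le_one_div_of_le (by norm_num) h17
          rw [hβdef]; linarith
        set C := (2 : ℝ) ^ (((n : ℝ) - 1) * β) with hC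
        have hBC : B = C * 2 ^ β := by
          rw [hB, hC, ← Real.rpow_add two_pos]
          congr 1
          ring
        have hs2 : (4 / 3 : ℝ) ≤ 2 ^ ((1 : ℝ) / 2) := by
          have h19 : (0 : ℝ) ≤ 2 ^ ((1 : ℝ) / 2) := (Real.rpow_pos_of_pos two_pos _).le
          have h20 : (2 : ℝ) ^ ((1 : ℝ) / 2) * 2 ^ ((1 : ℝ) / 2) = 2 := by
            rw [← Real.rpow_add two_pos]; norm_num
          nlinarith
        have h2β : (4 / 3 : ℝ) ≤ 2 ^ β := by
          calc (4 / 3 : ℝ) ≤ 2 ^ ((1 : ℝ) / 2) := hs2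
          _ ≤ 2 ^ β := Real.rpow_le_rpow_of_exponent_le one_le_two hβ
        have hCpos : (0 : ℝ) < C := Real.rpow_pos_of_pos two_pos _
        rw [hBC] at hBt
        nlinarith
      obtain ⟨x₀, W, hWr, hWs⟩ := ih ↥U T'' hUbound
      obtain ⟨x, W', hr1, hr2⟩ := push_extend hdU hsat hT'T x₀ W hWr hWs
      exact ⟨x, W', hr1, hr2.trans hTS⟩

def IsFlat (n k : ℕ) (H : Set (Fin n → ZMod 2)) : Prop :=
  ∃ (x : Fin n → ZMod 2) (W : Submodule (ZMod 2) (Fin n → ZMod 2)),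
    Module.finrank (ZMod 2) W = k ∧ H = (fun w => x + w) '' (W : Set (Fin n → ZMod 2))

theorem stmt_10 (n k : ℕ) (hk : 1 ≤ k) (hn : k ≤ n) (S : Set (Fin n → ZMod 2))
    (hS : (5 / 2 : ℝ) * 2 ^ ((n : ℝ) * (1 - 1 / 2 ^ (k - 1))) ≤ (S.ncard : ℝ)) :
    ∃ H : Set (Fin n → ZMod 2), IsFlat n k H ∧ H ⊆ S := by
  have hfr : finrank (ZMod 2) (Fin n → ZMod 2) = n := by
    simp [Module.finrank_pi]
  obtain ⟨x, W, hWr, hWs⟩ := main_flat k hk (Fin n → ZMod 2) S (by rw [hfr]; exact hS)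
  exact ⟨_, ⟨x, W, hWr, rfl⟩, hWs⟩
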